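/- arXiv:2512.18879 — 2 statements merged into one kernel-verified Lean document; each statement's English description precedes it below -/
import Mathlib

section
/- Discrete contactomorphism property of the discrete PMP update (Theorem: the type-II generating-function update preserves the discrete contact form): Let n, m be natural numbers, F : ℝⁿ × ℝᵐ → ℝⁿ and L_d : ℝⁿ × ℝᵐ → ℝ be differentiable, let Ω ⊆ ℝⁿ × ℝⁿ × ℝ be open (coordinates (x, p, z)), and let υ : Ω → ℝᵐ be a differentiable control selection satisfying the discrete stationarity condition ∇_u L_d(x, υ(x,p,z)) = (D_u F(x, υ(x,p,z)))ᵀ p for all (x,p,z) ∈ Ω (i.e. ∂_u H̃_d = 0 for the discrete Hamiltonian H̃_d(x,p,u) = ⟨p, F(x,u)⟩ − L_d(x,u)). Define on Ω the maps X(x,p,z) := F(x, υ(x,p,z)), Z(x,p,z) := z + L_d(x, υ(x,p,z)), and the updated costate π(x,p,z) := (D_x F(x, υ(x,p,z)))ᵀ p − ∇_x L_d(x, υ(x,p,z)). Then for every (x,p,z) ∈ Ω and every direction v = (v_x, v_p, v_z) ∈ ℝⁿ × ℝⁿ × ℝ, the Fréchet derivatives satisfy DZ(x,p,z)[v] − ⟨p,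 DX(x,p,z)[v]⟩ = v_z − ⟨π(x,p,z), v_x⟩. In other words, the discrete PMP update pulls back the contact 1-form dz_{k+1} − ⟨p_{k+1}, dx_{k+1}⟩ exactly to dz_k − ⟨p_k, dx_k⟩, so it is a strict discrete contactomorphism. -/
open scoped RealInnerProductSpace
noncomputable section

theorem gradient_inner_eq {E : Type*} [NormedAddCommGroup E] [InnerProductSpace ℝ E]
    [CompleteSpace E] (f : E → ℝ) (x y : E) :
    ⟪gradient f x, y⟫ = fderiv ℝ f x y := by
  rw [gradient, InnerProductSpace.toDual_symm_apply]

/-- Discrete contactomorphism property of the discrete PMP update: the type-II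
generating-function update pulls back the contact 1-form
`dz_{k+1} − ⟨p_{k+1}, dx_{k+1}⟩` exactly to `dz_k − ⟨p_k, dx_k⟩`. -/
theorem discrete_PMP_update_is_contactomorphism {n m : ℕ}
    (F : EuclideanSpace ℝ (Fin n) × EuclideanSpace ℝ (Fin m) → EuclideanSpace ℝ (Fin n))
    (Ld : EuclideanSpace ℝ (Fin n) × EuclideanSpace ℝ (Fin m) → ℝ)
    (hF : Differentiable ℝ F) (hLd : Differentiable ℝ Ld)
    (Ω : Set (EuclideanSpace ℝ (Fin n) × EuclideanSpace ℝ (Fin n) × ℝ)) (hΩ : IsOpen Ω)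
    (υ : EuclideanSpace ℝ (Fin n) × EuclideanSpace ℝ (Fin n) × ℝ → EuclideanSpace ℝ (Fin m))
    (hυ : ∀ w ∈ Ω, DifferentiableAt ℝ υ w)
    -- discrete stationarity: ∇ᵤ L_d(x, υ) = (DᵤF(x, υ))ᵀ p on Ω
    (hstat : ∀ w ∈ Ω,
      gradient (fun v => Ld (w.1, v)) (υ w)
        = (ContinuousLinearMap.adjoint
            (fderiv ℝ (fun v => F (w.1, v)) (υ w))) w.2.1) :
    -- X(x,p,z) = F(x, υ(x,p,z)),  Z(x,p,z) = z + L_d(x, υ(x,p,z)),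
    -- π(x,p,z) = (DₓF(x,υ))ᵀ p − ∇ₓL_d(x,υ)
    ∀ w ∈ Ω, ∀ v : EuclideanSpace ℝ (Fin n) × EuclideanSpace ℝ (Fin n) × ℝ,
      fderiv ℝ (fun w' => w'.2.2 + Ld (w'.1, υ w')) w v
          - ⟪w.2.1, fderiv ℝ (fun w' => F (w'.1, υ w')) w v⟫
        = v.2.2
          - ⟪(ContinuousLinearMap.adjoint
                (fderiv ℝ (fun x => F (x, υ w)) w.1)) w.2.1
              - gradient (fun x => Ld (x, υ w)) w.1, v.1⟫ := by
  intro w hw v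
  have hυw : HasFDerivAt υ (fderiv ℝ υ w) w := (hυ w hw).hasFDerivAt
  set Dυ := fderiv ℝ υ w with hDυ
  have hg : HasFDerivAt (fun w' : EuclideanSpace ℝ (Fin n) × EuclideanSpace ℝ (Fin n) × ℝ =>
      (w'.1, υ w')) ((ContinuousLinearMap.fst ℝ _ _).prod Dυ) w :=
    HasFDerivAt.prodMk (hasFDerivAt_fst) hυw
  set DF := fderiv ℝ F (w.1, υ w) with hDF
  set DL := fderiv ℝ Ld (w.1, υ w) with hDL
  have hFg : HasFDerivAt (fun w' => F (w'.1, υ w'))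
      (DF.comp ((ContinuousLinearMap.fst ℝ _ _).prod Dυ)) w :=
    ((hF _).hasFDerivAt).comp w hg
  have hLg : HasFDerivAt (fun w' => Ld (w'.1, υ w'))
      (DL.comp ((ContinuousLinearMap.fst ℝ _ _).prod Dυ)) w :=
    ((hLd _).hasFDerivAt).comp w hg
  have hz : HasFDerivAt (fun w' : EuclideanSpace ℝ (Fin n) × EuclideanSpace ℝ (Fin n) × ℝ =>
      w'.2.2) ((ContinuousLinearMap.snd ℝ (EuclideanSpace ℝ (Fin n)) ℝ).comp
        (ContinuousLinearMap.snd ℝ _ _)) w :=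
    hasFDerivAt_snd.comp w hasFDerivAt_snd
  have hZ : fderiv ℝ (fun w' => w'.2.2 + Ld (w'.1, υ w')) w v
      = v.2.2 + DL (v.1, Dυ v) := by
    rw [(show HasFDerivAt (fun w' => w'.2.2 + Ld (w'.1, υ w')) _ w from hz.add hLg).fderiv]; rfl
  have hX : fderiv ℝ (fun w' => F (w'.1, υ w')) w v = DF (v.1, Dυ v) := by
    rw [hFg.fderiv]; rfl
  -- partial derivatives
  have hFx : fderiv ℝ (fun x => F (x, υ w)) w.1
      = DF.comp (ContinuousLinearMap.inl ℝ _ _) := by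
    exact (((hF _).hasFDerivAt).comp w.1 (hasFDerivAt_prodMk_left w.1 (υ w))).fderiv
  have hFu : fderiv ℝ (fun u => F (w.1, u)) (υ w)
      = DF.comp (ContinuousLinearMap.inr ℝ _ _) := by
    exact (((hF _).hasFDerivAt).comp (υ w) (hasFDerivAt_prodMk_right w.1 (υ w))).fderiv
  have hLx : fderiv ℝ (fun x => Ld (x, υ w)) w.1
      = DL.comp (ContinuousLinearMap.inl ℝ _ _) := by
    exact (((hLd _).hasFDerivAt).comp w.1 (hasFDerivAt_prodMk_left w.1 (υ w))).fderiv
  have hLu : fderiv ℝ (fun u => Ld (w.1, u)) (υ w)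
      = DL.comp (ContinuousLinearMap.inr ℝ _ _) := by
    exact (((hLd _).hasFDerivAt).comp (υ w) (hasFDerivAt_prodMk_right w.1 (υ w))).fderiv
  -- split DF, DL along the two components
  have split : (v.1, Dυ v) = ((v.1, 0) : _ × EuclideanSpace ℝ (Fin m))
      + ((0 : EuclideanSpace ℝ (Fin n)), Dυ v) := by
    simp [Prod.mk_add_mk]
  have hDFsplit : DF (v.1, Dυ v)
      = fderiv ℝ (fun x => F (x, υ w)) w.1 v.1
        + fderiv ℝ (fun u => F (w.1, u)) (υ w) (Dυ v) := by
    rw [split, map_add, hFx, hFu]; rfl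
  have hDLsplit : DL (v.1, Dυ v)
      = fderiv ℝ (fun x => Ld (x, υ w)) w.1 v.1
        + fderiv ℝ (fun u => Ld (w.1, u)) (υ w) (Dυ v) := by
    rw [split, map_add, hLx, hLu]; rfl
  -- stationarity kills the u-direction terms
  have hcancel : fderiv ℝ (fun u => Ld (w.1, u)) (υ w) (Dυ v)
      = ⟪w.2.1, fderiv ℝ (fun u => F (w.1, u)) (υ w) (Dυ v)⟫ := by
    rw [← gradient_inner_eq, hstat w hw, ContinuousLinearMap.adjoint_inner_left]
  have hgradx : ⟪gradient (fun x => Ld (x, υ w)) w.1, v.1⟫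
      = fderiv ℝ (fun x => Ld (x, υ w)) w.1 v.1 := gradient_inner_eq _ _ _
  have hadjx : ⟪(ContinuousLinearMap.adjoint (fderiv ℝ (fun x => F (x, υ w)) w.1)) w.2.1, v.1⟫
      = ⟪w.2.1, fderiv ℝ (fun x => F (x, υ w)) w.1 v.1⟫ :=
    ContinuousLinearMap.adjoint_inner_left _ _ _
  rw [hZ, hX, hDFsplit, hDLsplit, inner_add_right, inner_sub_left, hgradx, hadjx, hcancel]
  ring
end
end

section
/- The PMP extended flow preserves the contact form when the Hamiltonian is independent of the cost variable: Let n ≥ 1 and let H : ℝⁿ × ℝⁿ → ℝ be twice continuously differentiable. Define the vector field X on ℝⁿ × ℝⁿ × ℝ by X(x,p,z) := (∇_p H(x,p), −∇_x H(x,p), ⟨p, ∇_p H(x,p)⟩ − H(x,p)). Let φ : ℝ × (ℝⁿ × ℝⁿ × ℝ) → ℝⁿ × ℝⁿ × ℝ be twice continuously differentiable with φ(0, w) = w and ∂_t φ(t, w) = X(φ(t, w)) for all (t, w). Write φ(t,w) = (x_t(w), p_t(w), z_t(w)). Then for every t ∈ ℝ, every w = (x, p, z), and every direction v = (v_x, v_p,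 v_z), one has D z_t(w)[v] − ⟨p_t(w), D x_t(w)[v]⟩ = v_z − ⟨p, v_x⟩; that is, the pullback of the contact form θ = dz − ⟨p, dx⟩ under the time-t flow map equals θ. -/
open scoped RealInnerProductSpace
noncomputable section

def pmpField {n : ℕ} (H : EuclideanSpace ℝ (Fin n) × EuclideanSpace ℝ (Fin n) → ℝ)
    (w : EuclideanSpace ℝ (Fin n) × EuclideanSpace ℝ (Fin n) × ℝ) :
    EuclideanSpace ℝ (Fin n) × EuclideanSpace ℝ (Fin n) × ℝ :=
  (gradient (fun q => H (w.1, q)) w.2.1,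
   -gradient (fun y => H (y, w.2.1)) w.1,
   ⟪w.2.1, gradient (fun q => H (w.1, q)) w.2.1⟫ - H (w.1, w.2.1))

lemma partial_grad_inner {E : Type*} [NormedAddCommGroup E] [InnerProductSpace ℝ E]
    [CompleteSpace E] (f : E × E → ℝ) (x p : E) (hf : DifferentiableAt ℝ f (x, p)) (a b : E) :
    fderiv ℝ f (x, p) (a, b)
      = ⟪gradient (fun y => f (y, p)) x, a⟫ + ⟪gradient (fun q => f (x, q)) p, b⟫ := by
  have h1 : HasFDerivAt (fun y : E => ((y, p) : E × E))
      ((ContinuousLinearMap.id ℝ E).prod 0) x :=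
    HasFDerivAt.prodMk (hasFDerivAt_id x) (hasFDerivAt_const p x)
  have h2 : HasFDerivAt (fun q : E => ((x, q) : E × E))
      ((0 : E →L[ℝ] E).prod (ContinuousLinearMap.id ℝ E)) p :=
    HasFDerivAt.prodMk (hasFDerivAt_const x p) (hasFDerivAt_id p)
  have hx : HasFDerivAt (fun y => f (y, p))
      ((fderiv ℝ f (x, p)).comp ((ContinuousLinearMap.id ℝ E).prod 0)) x :=
    hf.hasFDerivAt.comp x h1
  have hp : HasFDerivAt (fun q => f (x, q))
      ((fderiv ℝ f (x, p)).comp ((0 : E →L[ℝ] E).prod (ContinuousLinearMap.id ℝ E))) p :=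
    hf.hasFDerivAt.comp p h2
  rw [hx.hasGradientAt.gradient, hp.hasGradientAt.gradient,
    InnerProductSpace.toDual_symm_apply, InnerProductSpace.toDual_symm_apply]
  have hab : (a, b) = ((a, 0) : E × E) + (0, b) := by simp
  rw [hab, map_add]
  simp

lemma cross_deriv {W F : Type*} [NormedAddCommGroup W] [NormedSpace ℝ W]
    [NormedAddCommGroup F] [NormedSpace ℝ F]
    (φ : ℝ × W → F) (hφ : ContDiff ℝ 2 φ) (t : ℝ) (w v : W) :
    HasDerivAt (fun s => fderiv ℝ φ (s, w) (0, v))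
      (fderiv ℝ (fun w' => fderiv ℝ φ (t, w') (1, 0)) w v) t := by
  have hφd : Differentiable ℝ φ := hφ.differentiable (by norm_num)
  have hD : ContDiff ℝ 1 (fderiv ℝ φ) := hφ.fderiv_right (by norm_num)
  have hDd : Differentiable ℝ (fderiv ℝ φ) := hD.differentiable (by norm_num)
  set S := fderiv ℝ (fderiv ℝ φ) (t, w) with hS
  have hsymm : ∀ a b, S a b = S b a :=
    second_derivative_symmetric (fun y => (hφd y).hasFDerivAt) (hDd (t, w)).hasFDerivAt
  have hcurve : HasDerivAt (fun s : ℝ => ((s, w) : ℝ × W)) (1, 0) t :=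
    HasDerivAt.prodMk (hasDerivAt_id t) (hasDerivAt_const t w)
  have h1 : HasDerivAt (fun s => fderiv ℝ φ (s, w)) (S (1, 0)) t :=
    (hDd (t, w)).hasFDerivAt.comp_hasDerivAt t hcurve
  have h2 : HasDerivAt (fun s => fderiv ℝ φ (s, w) ((0 : ℝ), v)) (S (1, 0) ((0 : ℝ), v)) t := by
    simpa using h1.clm_apply (hasDerivAt_const t (((0 : ℝ), v) : ℝ × W))
  have hinr : HasFDerivAt (fun w' : W => ((t, w') : ℝ × W))
      ((0 : W →L[ℝ] ℝ).prod (ContinuousLinearMap.id ℝ W)) w :=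
    HasFDerivAt.prodMk (hasFDerivAt_const t w) (hasFDerivAt_id w)
  have h3 : HasFDerivAt (fun w' => fderiv ℝ φ (t, w'))
      (S.comp ((0 : W →L[ℝ] ℝ).prod (ContinuousLinearMap.id ℝ W))) w :=
    (hDd (t, w)).hasFDerivAt.comp w hinr
  have h4 : HasFDerivAt (fun w' => fderiv ℝ φ (t, w') ((1 : ℝ), (0 : W)))
      ((ContinuousLinearMap.apply ℝ F ((1 : ℝ), (0 : W))).comp
        (S.comp ((0 : W →L[ℝ] ℝ).prod (ContinuousLinearMap.id ℝ W)))) w :=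
    (ContinuousLinearMap.apply ℝ F ((1 : ℝ), (0 : W))).hasFDerivAt.comp w h3
  have h5 : fderiv ℝ (fun w' => fderiv ℝ φ (t, w') ((1 : ℝ), (0 : W))) w v
      = S ((0 : ℝ), v) ((1 : ℝ), (0 : W)) := by
    rw [h4.fderiv]; simp
  rw [h5, hsymm]
  exact h2

/-- The PMP extended flow preserves the contact form `θ = dz − ⟨p, dx⟩` when the
Hamiltonian does not depend on the cost variable. -/
theorem pmp_flow_preserves_contact_form {n : ℕ} (hn : 1 ≤ n)
    (H : EuclideanSpace ℝ (Fin n) × EuclideanSpace ℝ (Fin n) → ℝ)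
    (hH : ContDiff ℝ 2 H)
    (φ : ℝ × (EuclideanSpace ℝ (Fin n) × EuclideanSpace ℝ (Fin n) × ℝ) →
      EuclideanSpace ℝ (Fin n) × EuclideanSpace ℝ (Fin n) × ℝ)
    (hφ : ContDiff ℝ 2 φ)
    (hφ0 : ∀ w, φ (0, w) = w)
    (hφflow : ∀ t w, HasDerivAt (fun s => φ (s, w)) (pmpField H (φ (t, w))) t) :
    ∀ (t : ℝ) (w v : EuclideanSpace ℝ (Fin n) × EuclideanSpace ℝ (Fin n) × ℝ),
      fderiv ℝ (fun w' => (φ (t, w')).2.2) w v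
          - ⟪(φ (t, w)).2.1, fderiv ℝ (fun w' => (φ (t, w')).1) w v⟫
        = v.2.2 - ⟪w.2.1, v.1⟫ := by
  intro t w v
  have hφd : Differentiable ℝ φ := hφ.differentiable (by norm_num)
  have hHd : Differentiable ℝ H := hH.differentiable (by norm_num)
  set pr1 : (EuclideanSpace ℝ (Fin n) × EuclideanSpace ℝ (Fin n) × ℝ) →L[ℝ] EuclideanSpace ℝ (Fin n) := ContinuousLinearMap.fst ℝ (EuclideanSpace ℝ (Fin n)) (EuclideanSpace ℝ (Fin n) × ℝ) with hpr1
  set pr2 : (EuclideanSpace ℝ (Fin n) × EuclideanSpace ℝ (Fin n) × ℝ) →L[ℝ] EuclideanSpace ℝ (Fin n) :=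
    (ContinuousLinearMap.fst ℝ (EuclideanSpace ℝ (Fin n)) ℝ).comp (ContinuousLinearMap.snd ℝ (EuclideanSpace ℝ (Fin n)) (EuclideanSpace ℝ (Fin n) × ℝ)) with hpr2
  set pr3 : (EuclideanSpace ℝ (Fin n) × EuclideanSpace ℝ (Fin n) × ℝ) →L[ℝ] ℝ :=
    (ContinuousLinearMap.snd ℝ (EuclideanSpace ℝ (Fin n)) ℝ).comp (ContinuousLinearMap.snd ℝ (EuclideanSpace ℝ (Fin n)) (EuclideanSpace ℝ (Fin n) × ℝ)) with hpr3
  set P : (EuclideanSpace ℝ (Fin n) × EuclideanSpace ℝ (Fin n) × ℝ) →L[ℝ] ℝ × (EuclideanSpace ℝ (Fin n) × EuclideanSpace ℝ (Fin n) × ℝ) := (0 : (EuclideanSpace ℝ (Fin n) × EuclideanSpace ℝ (Fin n) × ℝ) →L[ℝ] ℝ).prod (ContinuousLinearMap.id ℝ (EuclideanSpace ℝ (Fin n) × EuclideanSpace ℝ (Fin n) × ℝ)) with hP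
  have hPapp : ∀ u : EuclideanSpace ℝ (Fin n) × EuclideanSpace ℝ (Fin n) × ℝ, P u = ((0 : ℝ), u) := by
    intro u; simp [hP]
  have hψ : ∀ s : ℝ, HasFDerivAt (fun w' => φ (s, w')) ((fderiv ℝ φ (s, w)).comp P) w := by
    intro s
    exact (hφd (s, w)).hasFDerivAt.comp w
      (HasFDerivAt.prodMk (hasFDerivAt_const s w) (hasFDerivAt_id w))
  -- the flow equation in fderiv form
  have hflow : ∀ (s : ℝ) (u : EuclideanSpace ℝ (Fin n) × EuclideanSpace ℝ (Fin n) × ℝ), fderiv ℝ φ (s, u) (1, 0) = pmpField H (φ (s, u)) := by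
    intro s u
    have h1 : HasDerivAt (fun r => φ (r, u)) (fderiv ℝ φ (s, u) (1, 0)) s :=
      (hφd (s, u)).hasFDerivAt.comp_hasDerivAt s
        (HasDerivAt.prodMk (hasDerivAt_id s) (hasDerivAt_const s u))
    exact h1.unique (hφflow s u)
  -- rewrite the statement's fderivs
  have hx1 : fderiv ℝ (fun w' => (φ (t, w')).1) w v = (fderiv ℝ φ (t, w) ((0 : ℝ), v)).1 := by
    have h : HasFDerivAt (fun w' => (φ (t, w')).1)
        (pr1.comp ((fderiv ℝ φ (t, w)).comp P)) w := pr1.hasFDerivAt.comp w (hψ t)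
    rw [h.fderiv]
    simp [hpr1, hPapp]
  have hz : fderiv ℝ (fun w' => (φ (t, w')).2.2) w v = (fderiv ℝ φ (t, w) ((0 : ℝ), v)).2.2 := by
    have h : HasFDerivAt (fun w' => (φ (t, w')).2.2)
        (pr3.comp ((fderiv ℝ φ (t, w)).comp P)) w := pr3.hasFDerivAt.comp w (hψ t)
    rw [h.fderiv]
    simp [hpr3, hPapp]
  -- the contact pairing as a function of time
  set g : ℝ → ℝ := fun s => (fderiv ℝ φ (s, w) ((0 : ℝ), v)).2.2
      - ⟪(φ (s, w)).2.1, (fderiv ℝ φ (s, w) ((0 : ℝ), v)).1⟫ with hg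
  have key : ∀ s : ℝ, HasDerivAt g 0 s := by
    intro s
    set xs : EuclideanSpace ℝ (Fin n) := (φ (s, w)).1 with hxs
    set ps : EuclideanSpace ℝ (Fin n) := (φ (s, w)).2.1 with hps
    set Gp : EuclideanSpace ℝ (Fin n) := gradient (fun q => H (xs, q)) ps with hGp
    set Gx : EuclideanSpace ℝ (Fin n) := gradient (fun y => H (y, ps)) xs with hGx
    set A : EuclideanSpace ℝ (Fin n) := (fderiv ℝ φ (s, w) ((0 : ℝ), v)).1 with hA
    set B : EuclideanSpace ℝ (Fin n) := (fderiv ℝ φ (s, w) ((0 : ℝ), v)).2.1 with hB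
    set Y : (EuclideanSpace ℝ (Fin n) × EuclideanSpace ℝ (Fin n) × ℝ) → (EuclideanSpace ℝ (Fin n) × EuclideanSpace ℝ (Fin n) × ℝ) := fun w' => fderiv ℝ φ (s, w') ((1 : ℝ), ((0 : EuclideanSpace ℝ (Fin n) × EuclideanSpace ℝ (Fin n) × ℝ))) with hY
    set DY : EuclideanSpace ℝ (Fin n) × EuclideanSpace ℝ (Fin n) × ℝ := fderiv ℝ Y w v with hDY
    have hc : HasDerivAt (fun r => fderiv ℝ φ (r, w) ((0 : ℝ), v)) DY s :=
      cross_deriv φ hφ s w v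
    have hc1 : HasDerivAt (fun r => (fderiv ℝ φ (r, w) ((0 : ℝ), v)).1) (DY.1) s :=
      pr1.hasFDerivAt.comp_hasDerivAt s hc
    have hc3 : HasDerivAt (fun r => (fderiv ℝ φ (r, w) ((0 : ℝ), v)).2.2) (DY.2.2) s :=
      pr3.hasFDerivAt.comp_hasDerivAt s hc
    have hp : HasDerivAt (fun r => (φ (r, w)).2.1) ((pmpField H (φ (s, w))).2.1) s :=
      pr2.hasFDerivAt.comp_hasDerivAt s (hφflow s w)
    have hinner : HasDerivAt (fun r => ⟪(φ (r, w)).2.1, (fderiv ℝ φ (r, w) ((0 : ℝ), v)).1⟫)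
        (⟪ps, DY.1⟫ + ⟪(pmpField H (φ (s, w))).2.1, A⟫) s :=
      hp.inner ℝ hc1
    have hgder : HasDerivAt g
        (DY.2.2 - (⟪ps, DY.1⟫ + ⟪(pmpField H (φ (s, w))).2.1, A⟫)) s := hc3.sub hinner
    -- now compute DY.2.2
    have hYd : DifferentiableAt ℝ Y w := by
      have hDf : Differentiable ℝ (fderiv ℝ φ) :=
        (hφ.fderiv_right (m := 1) (by norm_num)).differentiable (by norm_num)
      have h1 : DifferentiableAt ℝ (fun w' => fderiv ℝ φ (s, w')) w :=
        (hDf (s, w)).comp w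
          ((HasFDerivAt.prodMk (hasFDerivAt_const s w) (hasFDerivAt_id w)).differentiableAt)
      exact (ContinuousLinearMap.apply ℝ
        (EuclideanSpace ℝ (Fin n) × EuclideanSpace ℝ (Fin n) × ℝ)
        ((1 : ℝ), 0)).differentiableAt.comp w h1
    have hY1F : HasFDerivAt (fun w' => (Y w').1) (pr1.comp (fderiv ℝ Y w)) w :=
      pr1.hasFDerivAt.comp w hYd.hasFDerivAt
    have hx'F : HasFDerivAt (fun w' => (φ (s, w')).1)
        (pr1.comp ((fderiv ℝ φ (s, w)).comp P)) w := pr1.hasFDerivAt.comp w (hψ s)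
    have hp'F : HasFDerivAt (fun w' => (φ (s, w')).2.1)
        (pr2.comp ((fderiv ℝ φ (s, w)).comp P)) w := pr2.hasFDerivAt.comp w (hψ s)
    have hYe : ∀ w', Y w' = pmpField H (φ (s, w')) := fun w' => hflow s w'
    -- z-component of Y
    have hfun : (fun w' => (Y w').2.2)
        = fun w' => ⟪(φ (s, w')).2.1, (Y w').1⟫ - H ((φ (s, w')).1, (φ (s, w')).2.1) := by
      funext w'
      rw [hYe w']
      simp [pmpField]
    have hHcF : HasFDerivAt (fun w' => H ((φ (s, w')).1, (φ (s, w')).2.1))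
        ((fderiv ℝ H (xs, ps)).comp
          ((pr1.comp ((fderiv ℝ φ (s, w)).comp P)).prod
            (pr2.comp ((fderiv ℝ φ (s, w)).comp P)))) w :=
      (hHd (xs, ps)).hasFDerivAt.comp w (HasFDerivAt.prodMk hx'F hp'F)
    have hInd : DifferentiableAt ℝ (fun w' => ⟪(φ (s, w')).2.1, (Y w').1⟫) w :=
      hp'F.differentiableAt.inner ℝ hY1F.differentiableAt
    have hz2 : DY.2.2 = fderiv ℝ (fun w' => (Y w').2.2) w v := by
      have h : HasFDerivAt (fun w' => (Y w').2.2) (pr3.comp (fderiv ℝ Y w)) w :=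
        pr3.hasFDerivAt.comp w hYd.hasFDerivAt
      rw [h.fderiv]
      simp [hpr3, hDY]
    have hYA : fderiv ℝ (fun w' => (φ (s, w')).1) w v = A := by
      rw [hx'F.fderiv]; simp [hpr1, hPapp, hA]
    have hYB : fderiv ℝ (fun w' => (φ (s, w')).2.1) w v = B := by
      rw [hp'F.fderiv]; simp [hpr2, hPapp, hB]
    have hY1v : fderiv ℝ (fun w' => (Y w').1) w v = DY.1 := by
      rw [hY1F.fderiv]; simp [hpr1, hDY]
    have hY1w : (Y w).1 = Gp := by rw [hYe w]; rfl
    have hHval : fderiv ℝ (fun w' => H ((φ (s, w')).1, (φ (s, w')).2.1)) w v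
        = ⟪Gx, A⟫ + ⟪Gp, B⟫ := by
      rw [hHcF.fderiv]
      have : ((pr1.comp ((fderiv ℝ φ (s, w)).comp P)).prod
          (pr2.comp ((fderiv ℝ φ (s, w)).comp P))) v = (A, B) := by
        simp [hpr1, hpr2, hPapp, hA, hB]
      simp only [ContinuousLinearMap.comp_apply, this]
      exact partial_grad_inner H xs ps (hHd (xs, ps)) A B
    have hDz : DY.2.2 = (⟪ps, DY.1⟫ + ⟪B, Gp⟫) - (⟪Gx, A⟫ + ⟪Gp, B⟫) := by
      rw [hz2, hfun]
      rw [fderiv_fun_sub hInd hHcF.differentiableAt]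
      rw [ContinuousLinearMap.sub_apply]
      rw [fderiv_inner_apply ℝ hp'F.differentiableAt hY1F.differentiableAt v]
      rw [hHval, hY1v, hYB, hY1w]
    have hpmp : (pmpField H (φ (s, w))).2.1 = -Gx := rfl
    have hzero : DY.2.2 - (⟪ps, DY.1⟫ + ⟪(pmpField H (φ (s, w))).2.1, A⟫) = 0 := by
      rw [hDz, hpmp]
      rw [inner_neg_left]
      rw [real_inner_comm B Gp]
      ring
    rw [hzero] at hgder
    exact hgder
  have hgdiff : Differentiable ℝ g := fun s => (key s).differentiableAt
  have hconst : g t = g 0 := is_const_of_deriv_eq_zero hgdiff (fun s => (key s).deriv) t 0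
  -- value at 0
  have hid : HasFDerivAt (fun w' : EuclideanSpace ℝ (Fin n) × EuclideanSpace ℝ (Fin n) × ℝ => φ (0, w')) (ContinuousLinearMap.id ℝ (EuclideanSpace ℝ (Fin n) × EuclideanSpace ℝ (Fin n) × ℝ)) w := by
    have h : (fun w' : EuclideanSpace ℝ (Fin n) × EuclideanSpace ℝ (Fin n) × ℝ => φ (0, w')) = id := funext hφ0
    rw [h]
    exact hasFDerivAt_id w
  have hcomp0 : (fderiv ℝ φ ((0 : ℝ), w)).comp P = ContinuousLinearMap.id ℝ (EuclideanSpace ℝ (Fin n) × EuclideanSpace ℝ (Fin n) × ℝ) :=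
    (hψ 0).unique hid
  have h0v : fderiv ℝ φ ((0 : ℝ), w) ((0 : ℝ), v) = v := by
    have : fderiv ℝ φ ((0 : ℝ), w) ((0 : ℝ), v) = ((fderiv ℝ φ ((0 : ℝ), w)).comp P) v := by
      rw [ContinuousLinearMap.comp_apply, hPapp]
    rw [this, hcomp0]
    rfl
  rw [hz, hx1]
  have : g t = g 0 := hconst
  rw [hg] at this
  simp only [h0v, hφ0 w] at this
  exact this
end
end
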